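/- The fixed point of the coupled operator H^π_κ is the pair (q^π, q^π_κ), where q^π is the action-value function of π in the γ-discounted MDP and q^π_κ is the optimal action-value function of the surrogate κγ-discounted MDP with shaped reward r(s,a) + γ(1-κ) E_{s'∼P(·|s,a)}[v^π(s')]. -/

import Mathlib

structure FinMDP (ns na : ℕ) where
  P : Fin ns → Fin na → Fin ns → ℝ
  r : Fin ns → Fin na → ℝ
  P_nonneg : ∀ s a s', 0 ≤ P s a s'
  P_sum : ∀ s a, ∑ s', P s a s' = 1

def IsPolicy {ns na : ℕ} (π : Fin ns → Fin na → ℝ) : Prop :=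
  (∀ s a, 0 ≤ π s a) ∧ ∀ s, ∑ a, π s a = 1

def Pmat {ns na : ℕ} (M : FinMDP ns na) (π : Fin ns → Fin na → ℝ) :
    Matrix (Fin ns) (Fin ns) ℝ :=
  Matrix.of fun s s' => ∑ a, π s a * M.P s a s'

def rvec {ns na : ℕ} (M : FinMDP ns na) (π : Fin ns → Fin na → ℝ) : Fin ns → ℝ :=
  fun s => ∑ a, π s a * M.r s a

noncomputable def value {ns na : ℕ} (M : FinMDP ns na) (γ : ℝ)
    (π : Fin ns → Fin na → ℝ) : Fin ns → ℝ :=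
  (1 - γ • Pmat M π)⁻¹.mulVec (rvec M π)

lemma aux_rowsum {ns na : ℕ} (M : FinMDP ns na) (π : Fin ns → Fin na → ℝ)
    (hπ : IsPolicy π) (s : Fin ns) : ∑ s', Pmat M π s s' = 1 := by
  simp only [Pmat, Matrix.of_apply]
  rw [Finset.sum_comm]
  simp_rw [← Finset.mul_sum, M.P_sum, mul_one]
  exact hπ.2 s

lemma aux_nonneg {ns na : ℕ} (M : FinMDP ns na) (π : Fin ns → Fin na → ℝ)
    (hπ : IsPolicy π) (s s' : Fin ns) : 0 ≤ Pmat M π s s' := by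
  simp only [Pmat, Matrix.of_apply]
  exact Finset.sum_nonneg fun a _ => mul_nonneg (hπ.1 s a) (M.P_nonneg s a s')

lemma aux_isUnit {ns na : ℕ} (M : FinMDP ns na) (π : Fin ns → Fin na → ℝ)
    (hπ : IsPolicy π) {γ : ℝ} (hγ0 : 0 ≤ γ) (hγ1 : γ < 1) :
    IsUnit (1 - γ • Pmat M π) := by
  rw [← Matrix.mulVec_injective_iff_isUnit]
  have hker : ∀ x : Fin ns → ℝ, (1 - γ • Pmat M π).mulVec x = 0 → x = 0 := by
    intro x hx
    rcases Nat.eq_zero_or_pos ns with h0 | hns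
    · subst h0; funext s; exact s.elim0
    have hne : (Finset.univ : Finset (Fin ns)).Nonempty := ⟨⟨0, hns⟩, Finset.mem_univ _⟩
    set m := Finset.univ.sup' hne (fun s => |x s|) with hm
    have heq : ∀ s, x s = γ * ∑ s', Pmat M π s s' * x s' := by
      intro s
      have h1 := congrFun hx s
      simp only [Matrix.sub_mulVec, Matrix.one_mulVec, Matrix.smul_mulVec,
        Pi.sub_apply, Pi.smul_apply, Pi.zero_apply, smul_eq_mul] at h1
      rw [sub_eq_zero] at h1
      rw [h1]; rfl
    have hle : ∀ s, |x s| ≤ γ * m := by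
      intro s
      rw [heq s, abs_mul, abs_of_nonneg hγ0]
      refine mul_le_mul_of_nonneg_left ?_ hγ0
      calc |∑ s', Pmat M π s s' * x s'| ≤ ∑ s', |Pmat M π s s' * x s'| :=
            Finset.abs_sum_le_sum_abs _ _
        _ ≤ ∑ s', Pmat M π s s' * m := by
            refine Finset.sum_le_sum fun s' _ => ?_
            rw [abs_mul, abs_of_nonneg (aux_nonneg M π hπ s s')]
            exact mul_le_mul_of_nonneg_left
              (Finset.le_sup' (fun t => |x t|) (Finset.mem_univ s')) (aux_nonneg M π hπ s s')
        _ = m := by rw [← Finset.sum_mul, aux_rowsum M π hπ, one_mul]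
    have hmle : m ≤ γ * m := Finset.sup'_le hne _ fun b _ => hle b
    have hm0 : 0 ≤ m := le_trans (abs_nonneg (x ⟨0, hns⟩)) (Finset.le_sup' (fun t => |x t|) (Finset.mem_univ (⟨0, hns⟩ : Fin ns)))
    have hmz : m ≤ 0 := by nlinarith
    funext s
    simpa using abs_nonpos_iff.mp (le_trans (hle s) (by nlinarith))
  intro x y hxy
  have h2 : (1 - γ • Pmat M π).mulVec (x - y) = 0 := by
    rw [Matrix.mulVec_sub, hxy, sub_self]
  exact sub_eq_zero.mp (hker _ h2)

lemma value_fix {ns na : ℕ} (M : FinMDP ns na) (π : Fin ns → Fin na → ℝ)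
    (hπ : IsPolicy π) {γ : ℝ} (hγ0 : 0 ≤ γ) (hγ1 : γ < 1) (s : Fin ns) :
    value M γ π s = rvec M π s + γ * ∑ s', Pmat M π s s' * value M γ π s' := by
  have hu := aux_isUnit M π hπ hγ0 hγ1
  have h : (1 - γ • Pmat M π).mulVec (value M γ π) = rvec M π := by
    rw [value, Matrix.mulVec_mulVec,
      Matrix.mul_nonsing_inv _ ((Matrix.isUnit_iff_isUnit_det _).mp hu), Matrix.one_mulVec]
  have h1 := congrFun h s
  simp only [Matrix.sub_mulVec, Matrix.one_mulVec, Matrix.smul_mulVec,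
    Pi.sub_apply, Pi.smul_apply, smul_eq_mul] at h1
  have h2 : (Pmat M π).mulVec (value M γ π) s = ∑ s', Pmat M π s s' * value M γ π s' := rfl
  rw [h2] at h1
  linarith

lemma key_sum {ns na : ℕ} (M : FinMDP ns na) (π : Fin ns → Fin na → ℝ)
    (hπ : IsPolicy π) {γ : ℝ} (hγ0 : 0 ≤ γ) (hγ1 : γ < 1) (s' : Fin ns) :
    ∑ a', π s' a' * (M.r s' a' + γ * ∑ s'', M.P s' a' s'' * value M γ π s'')
      = value M γ π s' := by
  rw [value_fix M π hπ hγ0 hγ1 s']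
  simp_rw [mul_add, Finset.sum_add_distrib]
  congr 1
  simp only [Pmat, rvec, Matrix.of_apply, Finset.sum_mul, Finset.mul_sum]
  rw [Finset.sum_comm]
  refine Finset.sum_congr rfl fun a _ => ?_
  exact Finset.sum_congr rfl fun t _ => by ring

/-- The fixed point of the coupled operator `H^π_κ` is `(q^π, q^π_κ)`, where `q^π` is the
action-value function of `π` and `q^π_κ` is the optimal action-value function of the surrogate
`κγ`-discounted MDP with shaped reward `r(s,a) + γ(1-κ) E_{s'}[v^π(s')]` (characterized by its
Bellman optimality equation). -/
theorem stmt8 {ns na : ℕ} (hna : 0 < na) (γ κ : ℝ) (hγ : γ ∈ Set.Ioo (0:ℝ) 1)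
    (hκ : κ ∈ Set.Icc (0:ℝ) 1) (M : FinMDP ns na)
    (π : Fin ns → Fin na → ℝ) (hπ : IsPolicy π)
    (qκ : Fin ns × Fin na → ℝ)
    (hqκ : ∀ sa : Fin ns × Fin na,
      qκ sa = M.r sa.1 sa.2 + γ * (1-κ) * ∑ s', M.P sa.1 sa.2 s' * value M γ π s'
        + κ * γ * ∑ s', M.P sa.1 sa.2 s' * (⨆ a' : Fin na, qκ (s', a'))) :
    let qπ : Fin ns × Fin na → ℝ :=
      fun sa => M.r sa.1 sa.2 + γ * ∑ s', M.P sa.1 sa.2 s' * value M γ π s'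
    let H : ((Fin ns × Fin na → ℝ) × (Fin ns × Fin na → ℝ)) →
            ((Fin ns × Fin na → ℝ) × (Fin ns × Fin na → ℝ)) :=
      fun Q =>
        (fun sa => M.r sa.1 sa.2 +
            γ * ∑ s', M.P sa.1 sa.2 s' * ∑ a', π s' a' * Q.1 (s', a'),
         fun sa => M.r sa.1 sa.2 +
            γ * (1-κ) * ∑ s', M.P sa.1 sa.2 s' * ∑ a', π s' a' * Q.1 (s', a') +
            κ * γ * ∑ s', M.P sa.1 sa.2 s' * (⨆ a' : Fin na, Q.2 (s', a')))
    H (qπ, qκ) = (qπ, qκ) := by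
  intro qπ H
  obtain ⟨hγ0, hγ1⟩ := hγ
  have hkey : ∀ s' : Fin ns, (∑ a', π s' a' * qπ (s', a')) = value M γ π s' :=
    fun s' => key_sum M π hπ (le_of_lt hγ0) hγ1 s'
  refine Prod.ext ?_ ?_
  · funext sa
    show M.r sa.1 sa.2 + γ * ∑ s', M.P sa.1 sa.2 s' * ∑ a', π s' a' * qπ (s', a')
        = qπ sa
    simp_rw [hkey]; rfl
  · funext sa
    show M.r sa.1 sa.2 +
        γ * (1-κ) * ∑ s', M.P sa.1 sa.2 s' * ∑ a', π s' a' * qπ (s', a') +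
        κ * γ * ∑ s', M.P sa.1 sa.2 s' * (⨆ a' : Fin na, qκ (s', a')) = qκ sa
    simp_rw [hkey]
    exact (hqκ sa).symm
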